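/- Let n ≥ 2 be an integer and define Φ(t) = n ∫₀ᵗ (sinh s)^{n-1} ds for t ≥ 0. Then for all t ≥ 0, (sinh t)^{n(n-1)} − Φ(t)^{n-1} − ((n−1)/n)^n · Φ(t)^n ≥ 0. -/

import Mathlib

open Real Set

noncomputable def Phi' (n : ℕ) : ℝ → ℝ := fun t => (n:ℝ) * ∫ s in (0:ℝ)..t, Real.sinh s ^ (n-1)

lemma Phi'_zero (n : ℕ) : Phi' n 0 = 0 := by simp [Phi']

lemma Phi'_hasDerivAt (n : ℕ) (t : ℝ) :
    HasDerivAt (Phi' n) ((n:ℝ) * Real.sinh t ^ (n-1)) t := by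
  have hcont : Continuous (fun s : ℝ => Real.sinh s ^ (n-1)) := Real.continuous_sinh.pow _
  have h := intervalIntegral.integral_hasDerivAt_right
    (hcont.intervalIntegrable 0 t)
    (hcont.stronglyMeasurableAtFilter _ _) hcont.continuousAt
  exact h.const_mul (n:ℝ)

lemma Phi'_nonneg (n : ℕ) (t : ℝ) (ht : 0 ≤ t) : 0 ≤ Phi' n t := by
  apply mul_nonneg (Nat.cast_nonneg n)
  apply intervalIntegral.integral_nonneg ht
  intro s hs
  exact pow_nonneg (Real.sinh_nonneg_iff.2 hs.1) _

lemma nonneg_of_deriv (f f' : ℝ → ℝ)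
    (hf : ∀ x, HasDerivAt f (f' x) x)
    (h0 : f 0 = 0) (hd : ∀ x, 0 < x → 0 ≤ f' x) :
    ∀ t, 0 ≤ t → 0 ≤ f t := by
  intro t ht
  have hmono : MonotoneOn f (Set.Ici (0:ℝ)) := by
    apply monotoneOn_of_deriv_nonneg (convex_Ici 0)
      (fun x _ => (hf x).continuousAt.continuousWithinAt)
      (fun x _ => (hf x).differentiableAt.differentiableWithinAt)
    intro x hx
    rw [interior_Ici] at hx
    rw [(hf x).deriv]
    exact hd x hx
  have := hmono Set.self_mem_Ici ht ht
  rwa [h0] at this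

lemma lemA (n : ℕ) (hn : 2 ≤ n) (t : ℝ) (ht : 0 ≤ t) :
    ((n:ℝ)-1) * Phi' n t ≤ (n:ℝ) * Real.sinh t ^ (n-1) := by
  have key := nonneg_of_deriv
    (fun x => (n:ℝ) * Real.sinh x ^ (n-1) - ((n:ℝ)-1) * Phi' n x)
    (fun x => (n:ℝ) * (↑(n-1) * Real.sinh x ^ (n-1-1) * Real.cosh x)
      - ((n:ℝ)-1) * ((n:ℝ) * Real.sinh x ^ (n-1)))
    (fun x => (((Real.hasDerivAt_sinh x).pow (n-1)).const_mul _).sub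
      ((Phi'_hasDerivAt n x).const_mul _))
    (by simp [Phi'_zero, Real.sinh_zero, zero_pow (show n-1 ≠ 0 by omega)])
    (fun x hx => by
      have hs : 0 ≤ Real.sinh x := Real.sinh_nonneg_iff.2 hx.le
      have h1 : Real.sinh x ^ (n-1) ≤ Real.sinh x ^ (n-1-1) * Real.cosh x := by
        have e : n - 1 = (n-1-1) + 1 := by omega
        rw [e, pow_succ]
        exact mul_le_mul_of_nonneg_left (Real.sinh_lt_cosh x).le (pow_nonneg hs _)
      have hc : (0:ℝ) ≤ (n:ℝ) * ((n:ℝ)-1) := by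
        have : (2:ℝ) ≤ (n:ℝ) := by exact_mod_cast hn
        nlinarith
      have := mul_le_mul_of_nonneg_left h1 hc
      have hcast : ((n-1:ℕ):ℝ) = (n:ℝ)-1 := by
        push_cast [Nat.cast_sub (by omega : 1 ≤ n)]; ring
      rw [hcast]
      nlinarith [this])
    t ht
  linarith

lemma lemC1 (n : ℕ) (hn : 2 ≤ n) (t : ℝ) (ht : 0 ≤ t) :
    (n:ℝ) + ((n:ℝ)-1) * Phi' n t ≤ (n:ℝ) * Real.cosh t ^ (n-1) := by
  have key := nonneg_of_deriv
    (fun x => (n:ℝ) * Real.cosh x ^ (n-1) - ((n:ℝ) + ((n:ℝ)-1) * Phi' n x))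
    (fun x => (n:ℝ) * (↑(n-1) * Real.cosh x ^ (n-1-1) * Real.sinh x)
      - (0 + ((n:ℝ)-1) * ((n:ℝ) * Real.sinh x ^ (n-1))))
    (fun x => (((Real.hasDerivAt_cosh x).pow (n-1)).const_mul _).sub
      ((hasDerivAt_const x ((n:ℝ))).add ((Phi'_hasDerivAt n x).const_mul _)))
    (by simp [Phi'_zero, Real.cosh_zero])
    (fun x hx => by
      have hs : 0 ≤ Real.sinh x := Real.sinh_nonneg_iff.2 hx.le
      have h1 : Real.sinh x ^ (n-1) ≤ Real.cosh x ^ (n-1-1) * Real.sinh x := by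
        have e : n - 1 = (n-1-1) + 1 := by omega
        rw [e, pow_succ]
        exact mul_le_mul_of_nonneg_right
          (pow_le_pow_left₀ hs (Real.sinh_lt_cosh x).le _) hs
      have hc : (0:ℝ) ≤ (n:ℝ) * ((n:ℝ)-1) := by
        have : (2:ℝ) ≤ (n:ℝ) := by exact_mod_cast hn
        nlinarith
      have := mul_le_mul_of_nonneg_left h1 hc
      have hcast : ((n-1:ℕ):ℝ) = (n:ℝ)-1 := by
        push_cast [Nat.cast_sub (by omega : 1 ≤ n)]; ring
      rw [hcast]
      nlinarith [this])
    t ht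
  linarith

lemma lemC (n : ℕ) (hn : 2 ≤ n) :
    ∀ k, 1 ≤ k → k ≤ n → ∀ t, 0 ≤ t →
    (n:ℝ)^k * Phi' n t ^ (k-1) + ((n:ℝ)-1)^k * Phi' n t ^ k
      ≤ (n:ℝ)^k * (Real.sinh t ^ (n*(k-1)) * Real.cosh t ^ (n-k)) := by
  intro k
  induction k with
  | zero => omega
  | succ k ih =>
    intro _ hkn t ht
    by_cases hk : k = 0
    · subst hk
      simp only [zero_add, Nat.sub_self, pow_one, pow_zero, Nat.mul_zero, mul_one, one_mul]
      have := lemC1 n hn t ht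
      linarith
    · have hk1 : 1 ≤ k := Nat.one_le_iff_ne_zero.2 hk
      have hkn' : k ≤ n := by omega
      -- the function whose nonnegativity we prove
      have key := nonneg_of_deriv
        (fun x => (n:ℝ)^(k+1) * (Real.sinh x ^ (n*k) * Real.cosh x ^ (n-(k+1)))
          - ((n:ℝ)^(k+1) * Phi' n x ^ k + ((n:ℝ)-1)^(k+1) * Phi' n x ^ (k+1)))
        (fun x => (n:ℝ)^(k+1) * ((↑(n*k) * Real.sinh x ^ (n*k-1) * Real.cosh x) * Real.cosh x ^ (n-(k+1))
            + Real.sinh x ^ (n*k) * (↑(n-(k+1)) * Real.cosh x ^ (n-(k+1)-1) * Real.sinh x))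
          - ((n:ℝ)^(k+1) * (↑k * Phi' n x ^ (k-1) * ((n:ℝ) * Real.sinh x ^ (n-1)))
            + ((n:ℝ)-1)^(k+1) * (↑(k+1) * Phi' n x ^ (k+1-1) * ((n:ℝ) * Real.sinh x ^ (n-1)))))
        (fun x => ((((Real.hasDerivAt_sinh x).pow (n*k)).mul
            ((Real.hasDerivAt_cosh x).pow (n-(k+1)))).const_mul _).sub
          ((((Phi'_hasDerivAt n x).pow k).const_mul _).add
            (((Phi'_hasDerivAt n x).pow (k+1)).const_mul _)))
        (by simp [Phi'_zero, Real.sinh_zero, zero_pow (show n*k ≠ 0 by positivity),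
              zero_pow (show k ≠ 0 from hk)])
        (fun x hx => by
          set S := Real.sinh x with hS
          set C := Real.cosh x with hC
          set y := Phi' n x with hy
          have hs : 0 < S := Real.sinh_pos_iff.2 hx
          have hsc : S ≤ C := (Real.sinh_lt_cosh x).le
          have hyn : 0 ≤ y := Phi'_nonneg n x hx.le
          have ihk := ih hk1 hkn' x hx.le
          have hp1 : n ≤ n * k := Nat.le_mul_of_pos_right _ (by omega)
          have hp2 : k ≤ n * k := Nat.le_mul_of_pos_left _ (by omega)
          have hnR : (2:ℝ) ≤ (n:ℝ) := by exact_mod_cast hn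
          -- h1 : IH multiplied by n*n*k*S^(n-1)
          have c1nn : (0:ℝ) ≤ (n:ℝ)*(n:ℝ)*k*S^(n-1) := by positivity
          have h1 := mul_le_mul_of_nonneg_left ihk c1nn
          have e1 : S^(n-1) * S^(n*(k-1)) = S^(n*k-1) := by
            rw [← pow_add]; congr 1
            rw [Nat.mul_sub_one]
            omega
          have e2 : C^(n-k) = C^(n-(k+1)) * C := by
            rw [← pow_succ]; congr 1; omega
          have h1' : (n:ℝ)*(n:ℝ)*k*S^(n-1) * ((n:ℝ)^k * y^(k-1) + ((n:ℝ)-1)^k * y^k)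
              ≤ (n:ℝ)*(n:ℝ)*(k:ℝ)*(n:ℝ)^k * (S^(n*k-1) * (C^(n-(k+1)) * C)) := by
            refine h1.trans_eq ?_
            rw [← e1, ← e2]; ring
          -- h2 : the second term bound
          have h2 : ((n:ℝ)-(↑k+1)) * ((n:ℝ)*((n:ℝ)-1)^k * y^k * S^(n-1))
              ≤ ((n:ℝ)-(↑k+1)) * ((n:ℝ)^(k+1) * (S^(n*k+1) * C^(n-(k+1)-1))) := by
            rcases eq_or_lt_of_le hkn with heq | hlt
            · have hz : (n:ℝ) - (↑k+1) = 0 := by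
                rw [← heq]; push_cast; ring
              rw [hz]; simp
            · apply mul_le_mul_of_nonneg_left _ (by
                have : ((k:ℝ)+1) ≤ (n:ℝ) := by exact_mod_cast hkn
                linarith)
              have hA := lemA n hn x hx.le
              have hAk : (((n:ℝ)-1)*y)^k ≤ ((n:ℝ)*S^(n-1))^k :=
                pow_le_pow_left₀ (mul_nonneg (by linarith) hyn) hA k
              rw [mul_pow, mul_pow, ← pow_mul] at hAk
              have e3 : S^((n-1)*k) * S^(n-1) = S^(n*k+1) * S^(n-(k+1)-1) := by
                rw [← pow_add, ← pow_add]; congr 1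
                rw [Nat.mul_sub_right_distrib, Nat.one_mul]
                omega
              have hpow : S^(n*k+1) * S^(n-(k+1)-1) ≤ S^(n*k+1) * C^(n-(k+1)-1) :=
                mul_le_mul_of_nonneg_left (pow_le_pow_left₀ hs.le hsc _) (by positivity)
              have hAk' := mul_le_mul_of_nonneg_left hAk
                (show (0:ℝ) ≤ (n:ℝ) * S^(n-1) by positivity)
              calc (n:ℝ)*((n:ℝ)-1)^k * y^k * S^(n-1)
                ≤ (n:ℝ)*((n:ℝ)^k * S^((n-1)*k)) * S^(n-1) := by linarith [hAk']
              _ = (n:ℝ)^(k+1) * (S^((n-1)*k) * S^(n-1)) := by ring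
              _ = (n:ℝ)^(k+1) * (S^(n*k+1) * S^(n-(k+1)-1)) := by rw [e3]
              _ ≤ (n:ℝ)^(k+1) * (S^(n*k+1) * C^(n-(k+1)-1)) := by
                  apply mul_le_mul_of_nonneg_left hpow (by positivity)
          -- assemble
          have hcast1 : ((n*k:ℕ):ℝ) = (n:ℝ)*(k:ℝ) := by push_cast; ring
          have hcast2 : ((n-(k+1):ℕ):ℝ) = (n:ℝ)-((k:ℝ)+1) := by
            push_cast [Nat.cast_sub hkn]; ring
          have hcast3 : ((k+1:ℕ):ℝ) = (k:ℝ)+1 := by push_cast; ring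
          rw [hcast1, hcast2, hcast3]
          simp only [Nat.add_sub_cancel]
          have epow : S^(n*k) * S = S^(n*k+1) := by rw [← pow_succ]
          have hiden : (n:ℝ)^(k+1) * ((n:ℝ)*(k:ℝ)*S^(n*k-1)*C*C^(n-(k+1))
                + S^(n*k) * (((n:ℝ)-((k:ℝ)+1))*C^(n-(k+1)-1)*S))
              - ((n:ℝ)^(k+1) * ((k:ℝ)*y^(k-1)*((n:ℝ)*S^(n-1)))
                + ((n:ℝ)-1)^(k+1)*(((k:ℝ)+1)*y^k*((n:ℝ)*S^(n-1))))
            = ((n:ℝ)*(n:ℝ)*(k:ℝ)*(n:ℝ)^k * (S^(n*k-1)*(C^(n-(k+1))*C))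
                - (n:ℝ)*(n:ℝ)*(k:ℝ)*S^(n-1)*((n:ℝ)^k*y^(k-1)+((n:ℝ)-1)^k*y^k))
              + (((n:ℝ)-((k:ℝ)+1)) * ((n:ℝ)^(k+1) * (S^(n*k+1) * C^(n-(k+1)-1)))
                - ((n:ℝ)-((k:ℝ)+1)) * ((n:ℝ)*((n:ℝ)-1)^k*y^k*S^(n-1))) := by
            rw [← epow]; ring
          have hfin := add_nonneg (sub_nonneg.2 h1') (sub_nonneg.2 h2)
          linarith [hiden ▸ hfin])
        t ht
    -- conclude C_{k+1} from key
      have hkey := key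
      simp only [Nat.add_sub_cancel] at hkey ⊢
      linarith [hkey]

theorem key_lemma_F_nonneg (n : ℕ) (hn : 2 ≤ n) (Φ : ℝ → ℝ)
    (hΦ : ∀ t, Φ t = (n : ℝ) * ∫ s in (0:ℝ)..t, Real.sinh s ^ (n - 1)) (t : ℝ) (ht : 0 ≤ t) :
    0 ≤ Real.sinh t ^ (n * (n - 1)) - Φ t ^ (n - 1)
      - (((n : ℝ) - 1) / n) ^ n * Φ t ^ n := by
  have hPt : Φ t = Phi' n t := hΦ t
  rw [hPt]
  have hC := lemC n hn n (by omega) le_rfl t ht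
  simp only [Nat.sub_self, pow_zero, mul_one] at hC
  have hn0 : (0:ℝ) < (n:ℝ) := by exact_mod_cast (show 0 < n by omega)
  have hnp : (0:ℝ) < (n:ℝ)^n := by positivity
  rw [div_pow, sub_sub, sub_nonneg]
  have h2 : (n:ℝ)^n * (Phi' n t ^ (n-1) + ((n:ℝ)-1)^n/(n:ℝ)^n * Phi' n t ^ n)
      = (n:ℝ)^n * Phi' n t ^ (n-1) + ((n:ℝ)-1)^n * Phi' n t ^ n := by
    field_simp
  have h3 : (n:ℝ)^n * (Phi' n t ^ (n-1) + ((n:ℝ)-1)^n/(n:ℝ)^n * Phi' n t ^ n)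
      ≤ (n:ℝ)^n * Real.sinh t ^ (n*(n-1)) := by
    rw [h2]; linarith
  exact le_of_mul_le_mul_left h3 hnp
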